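/- For odd n ≥ 3, the circulant Hermitian matrix A = circ(0, -i, i, -i, i, …, -i, i) of order n (alternating -i, i off the diagonal) satisfies A𝟙ₙ = 0, and 0 is a simple eigenvalue of A. -/

import Mathlib

open Matrix Finset
open Fin.NatCast

/-- for odd `n ≥ 3`, the circulant `circ(0, -i, i, …, -i, i)` satisfies
`A𝟙 = 0` and `0` is a simple eigenvalue. The `(j,k)` entry is `a_{(k-j) mod n}` where the
first row is `0, -i, i, -i, i, …` (entry `-i` at odd offsets, `i` at nonzero even offsets). -/
theorem stmt4 {n : ℕ} (hodd : Odd n) (hn : 3 ≤ n)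
    (A : Matrix (Fin n) (Fin n) ℂ)
    (hA : ∀ j k : Fin n, A j k =
      if j = k then 0
      else if ((k - j : Fin n) : ℕ) % 2 = 1 then -Complex.I else Complex.I) :
    A *ᵥ (fun _ => (1 : ℂ)) = 0 ∧
    ∀ v : Fin n → ℂ, A *ᵥ v = 0 → ∃ c : ℂ, v = fun _ => c := by
  obtain ⟨N, rfl⟩ : ∃ N, n = N + 1 := ⟨n - 1, by omega⟩
  set a : Fin (N + 1) → ℂ := fun m =>
    if m = 0 then 0 else if (m : ℕ) % 2 = 1 then -Complex.I else Complex.I with ha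
  have ha0 : a 0 = 0 := by simp [ha]
  have haodd : ∀ m : Fin (N + 1), m ≠ 0 → (m : ℕ) % 2 = 1 → a m = -Complex.I := by
    intro m h1 h2; simp [ha, h1, h2]
  have haeven : ∀ m : Fin (N + 1), m ≠ 0 → ¬ ((m : ℕ) % 2 = 1) → a m = Complex.I := by
    intro m h1 h2; simp [ha, h1, h2]
  have hAa : ∀ j k : Fin (N + 1), A j k = a (k - j) := by
    intro j k
    rw [hA]
    by_cases h : j = k
    · simp [ha, h]
    · have h2 : ¬ (k - j = 0) := by
        rw [sub_eq_zero]; exact fun hh => h hh.symm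
      simp [ha, h, h2]
  have hone : ((1 : Fin (N + 1)) : ℕ) = 1 := by
    rw [Fin.val_one']; exact Nat.mod_eq_of_lt (by omega)
  have hone0 : (1 : Fin (N + 1)) ≠ 0 := by
    intro h; rw [Fin.ext_iff, hone] at h; simp at h
  have key : ∀ m : Fin (N + 1), a m + a (m - 1) =
      if m = 0 then Complex.I else if m = 1 then -Complex.I else 0 := by
    intro m
    obtain ⟨p, hp⟩ := hodd
    by_cases h0 : m = 0
    · subst h0
      have h1 : ((0 - 1 : Fin (N + 1)) : ℕ) = N := by
        rw [Fin.coe_sub_one]; simp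
      have hne : (0 - 1 : Fin (N + 1)) ≠ 0 := by
        intro h; rw [Fin.ext_iff] at h; simp [h1] at h; omega
      have hpar : ¬ ((0 - 1 : Fin (N + 1)) : ℕ) % 2 = 1 := by rw [h1]; omega
      rw [ha0, haeven _ hne hpar, if_pos rfl, zero_add]
    · have hval : ((m - 1 : Fin (N + 1)) : ℕ) = (m : ℕ) - 1 := by
        rw [Fin.coe_sub_one, if_neg h0]
      have hm0 : (m : ℕ) ≠ 0 := fun h => h0 (Fin.ext (by simp [h]))
      by_cases h1 : m = 1
      · subst h1
        have he : (1 : Fin (N + 1)) - 1 = 0 := sub_self _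
        have hp1 : ((1 : Fin (N + 1)) : ℕ) % 2 = 1 := by rw [hone]
        rw [he, ha0, haodd _ hone0 hp1, if_neg hone0, if_pos rfl, add_zero]
      · have hm1 : (m : ℕ) ≠ 1 := fun h => h1 (Fin.ext (by rw [h, hone]))
        have hm2 : 2 ≤ (m : ℕ) := by omega
        have hne : m - 1 ≠ 0 := by
          intro h; rw [Fin.ext_iff] at h; simp [hval] at h; omega
        rw [if_neg h0, if_neg h1]
        rcases Nat.even_or_odd (m : ℕ) with he | hoo
        · have e1 : ¬ (m : ℕ) % 2 = 1 := by
            rcases he with ⟨c, hc⟩; omega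
          have e2 : ((m - 1 : Fin (N + 1)) : ℕ) % 2 = 1 := by
            rcases he with ⟨c, hc⟩; rw [hval]; omega
          rw [haeven _ h0 e1, haodd _ hne e2]; ring
        · have e1 : (m : ℕ) % 2 = 1 := Nat.odd_iff.mp hoo
          have e2 : ¬ ((m - 1 : Fin (N + 1)) : ℕ) % 2 = 1 := by rw [hval]; omega
          rw [haodd _ h0 e1, haeven _ hne e2]; ring
  have hmul : ∀ (v : Fin (N + 1) → ℂ) (j : Fin (N + 1)),
      (A *ᵥ v) j = ∑ m : Fin (N + 1), a m * v (j + m) := by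
    intro v j
    have h : (A *ᵥ v) j = ∑ k : Fin (N + 1), A j k * v k := rfl
    rw [h, ← Equiv.sum_comp (Equiv.addLeft j) (fun k => A j k * v k)]
    refine Finset.sum_congr rfl fun m _ => ?_
    simp [hAa, add_sub_cancel_left]
  have hsum : ∀ (v : Fin (N + 1) → ℂ) (j : Fin (N + 1)),
      (A *ᵥ v) j + (A *ᵥ v) (j + 1) = Complex.I * v j - Complex.I * v (j + 1) := by
    intro v j
    rw [hmul, hmul]
    have hshift : ∑ m : Fin (N + 1), a m * v (j + 1 + m)
        = ∑ m : Fin (N + 1), a (m - 1) * v (j + m) := by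
      rw [← Equiv.sum_comp (Equiv.subRight (1 : Fin (N + 1)))
        (fun m => a m * v (j + 1 + m))]
      refine Finset.sum_congr rfl fun m _ => ?_
      simp only [Equiv.subRight_apply]
      congr 2
      abel
    rw [hshift, ← Finset.sum_add_distrib]
    have hterm : ∀ m : Fin (N + 1), a m * v (j + m) + a (m - 1) * v (j + m)
        = (if m = 0 then Complex.I * v (j + m) else 0)
          + (if m = 1 then -Complex.I * v (j + m) else 0) := by
      intro m
      rw [← add_mul, key m]
      by_cases h0 : m = 0
      · subst h0; rw [if_pos rfl, if_pos rfl, if_neg (Ne.symm hone0)]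
        exact (add_zero _).symm
      · have hN : N ≠ 0 := by omega
        by_cases h1 : m = 1 <;> simp [h0, h1, hN]
    rw [Finset.sum_congr rfl fun m _ => hterm m, Finset.sum_add_distrib,
      Finset.sum_ite_eq' Finset.univ (0 : Fin (N + 1))
        (fun m => Complex.I * v (j + m)),
      Finset.sum_ite_eq' Finset.univ (1 : Fin (N + 1))
        (fun m => -Complex.I * v (j + m))]
    simp
    ring
  constructor
  · have hconst : ∀ j : Fin (N + 1),
        (A *ᵥ (fun _ => (1:ℂ))) j = ∑ m : Fin (N + 1), a m := by
      intro j; rw [hmul]; simp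
    funext j
    have h2 := hsum (fun _ => 1) j
    rw [hconst j, hconst (j + 1)] at h2
    have hz : ∑ m : Fin (N + 1), a m = 0 := by linear_combination h2 / 2
    rw [Pi.zero_apply, hconst j, hz]
  · intro v hv
    have hstep : ∀ j : Fin (N + 1), v (j + 1) = v j := by
      intro j
      have h2 := hsum v j
      rw [hv] at h2
      simp only [Pi.zero_apply, add_zero, zero_add] at h2
      have h3 : Complex.I * v j = Complex.I * v (j + 1) := by
        linear_combination -h2
      exact (mul_left_cancel₀ Complex.I_ne_zero h3).symm
    refine ⟨v 0, ?_⟩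
    funext j
    have hcast : ∀ m : ℕ, v ((m : Fin (N + 1))) = v 0 := by
      intro m
      induction m with
      | zero => simp
      | succ k ih =>
        have h4 : ((k + 1 : ℕ) : Fin (N + 1)) = ((k : ℕ) : Fin (N + 1)) + 1 := by
          push_cast; ring
        rw [h4, hstep, ih]
    have h5 := hcast (j : ℕ)
    rwa [Fin.cast_val_eq_self] at h5
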